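/- Suppose x̄ is a critical point of Ψ = φ − g with ξ̄ ∈ ∂φ(x̄) ∩ ∂g(x̄), where φ is m_φ-weakly convex, g is proper closed convex, and 0 < μ < 1/m_φ. Then z̄ := x̄ + μξ̄ satisfies prox_{μφ}(z̄) = prox_{μg}(z̄) = x̄ and ∇Ψ_μ(z̄) = 0. -/

import Mathlib

open scoped RealInnerProductSpace


section Aux

variable {E : Type*} [NormedAddCommGroup E] [InnerProductSpace ℝ E]

lemma minA (F : E → ℝ)
    (hF : ConvexOn ℝ Set.univ F) (x : E)
    (h : ∀ ε > (0:ℝ), ∀ᶠ y in nhds x, F x - ε * ‖y - x‖ ≤ F y) (y : E) : F x ≤ F y := by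
  rcases eq_or_ne y x with rfl | hyx
  · exact le_rfl
  have hn : (0:ℝ) < ‖y - x‖ := by
    rw [norm_pos_iff]; exact sub_ne_zero_of_ne hyx
  refine le_of_forall_pos_le_add fun ε hε => ?_
  have hε' : (0:ℝ) < ε / ‖y - x‖ := div_pos hε hn
  have hev := h _ hε'
  have htend : Filter.Tendsto (fun t : ℝ => x + t • (y - x)) (nhds 0) (nhds x) := by
    have : Filter.Tendsto (fun t : ℝ => x + t • (y - x)) (nhds 0) (nhds (x + (0:ℝ) • (y - x))) :=
      tendsto_const_nhds.add ((continuous_id.smul continuous_const).tendsto 0)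
    simpa using this
  have hev2 : ∀ᶠ t : ℝ in nhds 0,
      (F x - ε / ‖y - x‖ * ‖(x + t • (y - x)) - x‖ ≤ F (x + t • (y - x))) ∧ t < 1 :=
    (htend.eventually hev).and (eventually_lt_nhds one_pos)
  have hev3 := hev2.filter_mono (nhdsWithin_le_nhds (s := Set.Ioi (0:ℝ)))
  obtain ⟨t, ⟨hle, ht1⟩, ht0⟩ := (hev3.and (self_mem_nhdsWithin)).exists
  have ht0' : (0:ℝ) < t := ht0
  have hconv := hF.2 (Set.mem_univ x) (Set.mem_univ y)
    (by linarith : (0:ℝ) ≤ 1 - t) (le_of_lt ht0') (by ring)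
  have hpt : (1 - t) • x + t • y = x + t • (y - x) := by module
  rw [hpt] at hconv
  have hnorm : ‖(x + t • (y - x)) - x‖ = t * ‖y - x‖ := by
    rw [add_sub_cancel_left, norm_smul, Real.norm_eq_abs, abs_of_pos ht0']
  rw [hnorm] at hle
  have key : F x - ε * t ≤ (1 - t) • F x + t • F y := by
    calc F x - ε * t = F x - ε / ‖y - x‖ * (t * ‖y - x‖) := by
          field_simp
      _ ≤ F (x + t • (y - x)) := hle
      _ ≤ (1 - t) • F x + t • F y := hconv
  simp only [smul_eq_mul] at key
  nlinarith [key, ht0']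

lemma affineConvexOn (w : E) (a b : ℝ) :
    ConvexOn ℝ Set.univ (fun y : E => a * ⟪y, w⟫ + b) := by
  refine ⟨convex_univ, fun x _ y _ s t hs ht hst => ?_⟩
  apply le_of_eq
  dsimp only
  rw [inner_add_left, real_inner_smul_left, real_inner_smul_left]
  simp only [smul_eq_mul]
  have : t = 1 - s := by linarith
  subst this; ring

lemma normSqConvexOn : ConvexOn ℝ (Set.univ : Set E) (fun y : E => ‖y‖ ^ 2) := by
  refine ⟨convex_univ, fun x _ y _ s t hs ht hst => ?_⟩
  dsimp only
  simp only [smul_eq_mul]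
  have h1 : ‖s • x + t • y‖ ≤ s * ‖x‖ + t * ‖y‖ := by
    calc ‖s • x + t • y‖ ≤ ‖s • x‖ + ‖t • y‖ := norm_add_le _ _
      _ = s * ‖x‖ + t * ‖y‖ := by
          rw [norm_smul, norm_smul, Real.norm_eq_abs, Real.norm_eq_abs,
            abs_of_nonneg hs, abs_of_nonneg ht]
  have h2 : ‖s • x + t • y‖ ^ 2 ≤ (s * ‖x‖ + t * ‖y‖) ^ 2 :=
    pow_le_pow_left₀ (norm_nonneg _) h1 2
  nlinarith [mul_nonneg hs ht, sq_nonneg (‖x‖ - ‖y‖), norm_nonneg x, norm_nonneg y]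

lemma proxEq (f : E → ℝ) (μ c : ℝ) (hμ : 0 < μ) (hc : 0 < c) (z x p : E)
    (hK : ConvexOn ℝ Set.univ (fun y => f y + 1/(2*μ) * ‖y - z‖^2 - c * ‖y‖^2))
    (hloc : ∀ ε > (0:ℝ), ∀ᶠ y in nhds x,
      (f x + 1/(2*μ) * ‖x - z‖^2) - ε * ‖y - x‖ ≤ f y + 1/(2*μ) * ‖y - z‖^2)
    (hp : ∀ y, f p + 1/(2*μ) * ‖p - z‖^2 ≤ f y + 1/(2*μ) * ‖y - z‖^2) : p = x := by
  set F : E → ℝ := fun y => f y + 1/(2*μ) * ‖y - z‖^2 with hF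
  have hFconv : ConvexOn ℝ Set.univ F := by
    have h2 : ConvexOn ℝ (Set.univ : Set E) (fun y : E => c * ‖y‖ ^ 2) := by
      have := (normSqConvexOn (E := E)).smul (le_of_lt hc)
      simpa [smul_eq_mul] using this
    have := hK.add h2
    convert this using 1
    rfl
    funext y; simp only [hF, Pi.add_apply]; ring
  have hmin : ∀ y, F x ≤ F y := minA F hFconv x hloc
  have hpx : F p = F x := le_antisymm (hp x) (hmin p)
  set m : E := (1/2 : ℝ) • p + (1/2 : ℝ) • x with hm
  have hK2 := hK.2 (Set.mem_univ p) (Set.mem_univ x)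
    (by norm_num : (0:ℝ) ≤ 1/2) (by norm_num : (0:ℝ) ≤ 1/2) (by norm_num)
  simp only [smul_eq_mul] at hK2
  have hid : ‖m‖^2 = (1/2)*‖p‖^2 + (1/2)*‖x‖^2 - (1/4)*‖p - x‖^2 := by
    have h1 := norm_add_sq_real ((1/2:ℝ) • p) ((1/2:ℝ) • x)
    have h2 := norm_sub_sq_real p x
    rw [hm, h1, real_inner_smul_left, real_inner_smul_right, norm_smul, norm_smul]
    simp only [Real.norm_eq_abs]
    rw [h2]
    rw [abs_of_pos (by norm_num : (0:ℝ) < 1/2)]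
    ring
  have hid' : c * ‖m‖^2 = c*((1/2)*‖p‖^2 + (1/2)*‖x‖^2 - (1/4)*‖p - x‖^2) := by
    rw [hid]
  have h1 : F x ≤ F m := hmin m
  simp only [hF] at h1 hpx
  have hcq : c * ‖p - x‖^2 ≤ 0 := by nlinarith [hK2, hid', h1, hpx]
  have hq : ‖p - x‖^2 = 0 := by nlinarith [norm_nonneg (p - x), hc, hcq, sq_nonneg ‖p - x‖]
  have := pow_eq_zero_iff (n := 2) (by norm_num) |>.mp hq
  rw [norm_eq_zero, sub_eq_zero] at this
  exact this

lemma locAux (f : E → ℝ) (μ : ℝ) (hμ : 0 < μ) (x ξ : E)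
    (hf : ∀ ε > (0:ℝ), ∀ᶠ y in nhds x, f x + ⟪ξ, y - x⟫ - ε * ‖y - x‖ ≤ f y) :
    ∀ ε > (0:ℝ), ∀ᶠ y in nhds x,
      (f x + 1/(2*μ) * ‖x - (x + μ • ξ)‖^2) - ε * ‖y - x‖ ≤
        f y + 1/(2*μ) * ‖y - (x + μ • ξ)‖^2 := by
  intro ε hε
  filter_upwards [hf ε hε] with y hy
  have e1 : ‖y - (x + μ • ξ)‖^2 = ‖y - x‖^2 - 2*(μ*⟪ξ, y - x⟫) + μ^2*‖ξ‖^2 := by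
    have hrw : y - (x + μ • ξ) = (y - x) - μ • ξ := by module
    rw [hrw, norm_sub_sq_real, real_inner_smul_right, norm_smul, Real.norm_eq_abs,
      real_inner_comm]
    rw [mul_pow, sq_abs]
  have e2 : ‖x - (x + μ • ξ)‖^2 = μ^2*‖ξ‖^2 := by
    have hrw : x - (x + μ • ξ) = -(μ • ξ) := by module
    rw [hrw, norm_neg, norm_smul, Real.norm_eq_abs, mul_pow, sq_abs]
  rw [e1, e2]
  have hpos : 0 ≤ 1/(2*μ) * ‖y - x‖^2 := by positivity
  have hexp : 1/(2*μ) * (‖y - x‖^2 - 2*(μ*⟪ξ, y - x⟫) + μ^2*‖ξ‖^2) =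
      1/(2*μ) * ‖y - x‖^2 - ⟪ξ, y - x⟫ + 1/(2*μ) * (μ^2*‖ξ‖^2) := by
    field_simp
  rw [hexp]
  linarith [hy]

end Aux

/-- `v` is a general (Fréchet-type) subgradient of `φ` at `x`. -/
def IsGenSubgradientAt {n : ℕ} (φ : EuclideanSpace ℝ (Fin n) → ℝ)
    (v x : EuclideanSpace ℝ (Fin n)) : Prop :=
  ∀ ε > (0 : ℝ), ∀ᶠ y in nhds x, φ x + ⟪v, y - x⟫ - ε * ‖y - x‖ ≤ φ y

/-- If `xbar` is a critical point of `Ψ = φ − g` with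
`xibar ∈ ∂φ(xbar) ∩ ∂g(xbar)`, then `zbar := xbar + μ xibar` satisfies
`prox_{μφ}(zbar) = prox_{μg}(zbar) = xbar` and `∇Ψ_μ(zbar) = μ⁻¹(prox_{μg} zbar − prox_{μφ} zbar) = 0`. -/
theorem stmt9 {n : ℕ} (φ g : EuclideanSpace ℝ (Fin n) → ℝ) (mφ μ : ℝ)
    (hm : 0 < mφ) (hμ : 0 < μ) (hμm : μ < 1 / mφ)
    (hφclosed : LowerSemicontinuous φ)
    (hφweak : ConvexOn ℝ Set.univ (fun x => φ x + mφ / 2 * ‖x‖ ^ 2))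
    (hgconv : ConvexOn ℝ Set.univ g) (hgclosed : LowerSemicontinuous g)
    (proxφ proxg : EuclideanSpace ℝ (Fin n) → EuclideanSpace ℝ (Fin n))
    (hproxφ : ∀ z y, φ (proxφ z) + 1 / (2 * μ) * ‖proxφ z - z‖ ^ 2 ≤
      φ y + 1 / (2 * μ) * ‖y - z‖ ^ 2)
    (hproxg : ∀ z y, g (proxg z) + 1 / (2 * μ) * ‖proxg z - z‖ ^ 2 ≤
      g y + 1 / (2 * μ) * ‖y - z‖ ^ 2)
    (xbar xibar : EuclideanSpace ℝ (Fin n))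
    (hξφ : IsGenSubgradientAt φ xibar xbar) (hξg : IsGenSubgradientAt g xibar xbar) :
    proxφ (xbar + μ • xibar) = xbar ∧ proxg (xbar + μ • xibar) = xbar ∧
    (1 / μ) • (proxg (xbar + μ • xibar) - proxφ (xbar + μ • xibar)) = 0 := by
  set z : EuclideanSpace ℝ (Fin n) := xbar + μ • xibar with hz
  have hμ' : (2 : ℝ) * μ > 0 := by linarith
  have hcφ : (0:ℝ) < 1/(2*μ) - mφ/2 := by
    rw [lt_div_iff₀ hm] at hμm
    rw [sub_pos, div_lt_div_iff₀ two_pos hμ']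
    nlinarith
  have hKφ : ConvexOn ℝ Set.univ
      (fun y => φ y + 1/(2*μ) * ‖y - z‖^2 - (1/(2*μ) - mφ/2) * ‖y‖^2) := by
    have haff := affineConvexOn z (-(1/μ)) (1/(2*μ) * ‖z‖^2)
    have := hφweak.add haff
    convert this using 1
    rfl
    funext y
    simp only [Pi.add_apply]
    rw [norm_sub_sq_real]
    field_simp
    ring
  have hKg : ConvexOn ℝ Set.univ
      (fun y => g y + 1/(2*μ) * ‖y - z‖^2 - (1/(2*μ)) * ‖y‖^2) := by
    have haff := affineConvexOn z (-(1/μ)) (1/(2*μ) * ‖z‖^2)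
    have := hgconv.add haff
    convert this using 1
    rfl
    funext y
    simp only [Pi.add_apply]
    rw [norm_sub_sq_real]
    field_simp
    ring
  have h1 : proxφ z = xbar :=
    proxEq φ μ (1/(2*μ) - mφ/2) hμ hcφ z xbar (proxφ z) hKφ
      (locAux φ μ hμ xbar xibar hξφ) (hproxφ z)
  have h2 : proxg z = xbar :=
    proxEq g μ (1/(2*μ)) hμ (by positivity) z xbar (proxg z) hKg
      (locAux g μ hμ xbar xibar hξg) (hproxg z)
  exact ⟨h1, h2, by rw [h1, h2, sub_self, smul_zero]⟩
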